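/- Suppose X ∈ ℝ^{d_in×n} has no two identical columns, no zero columns, and satisfies n > rank(X). If σ: ℝ → ℝ is twice differentiable at 0 with σ(0) = 0, σ'(0) ≠ 0, and σ''(0) ≠ 0, then there exists u ∈ ℝ^{d_in} such that σ(uᵀX) (with σ applied entrywise) is a nonzero row vector and σ(uᵀX) does not lie in the row space of X. -/

import Mathlib

open scoped BigOperators

namespace CoLA

noncomputable section

/-- Frobenius norm of a real matrix. -/
def frobNorm {m n : ℕ} (M : Matrix (Fin m) (Fin n) ℝ) : ℝ :=
  Real.sqrt (∑ i, ∑ j, (M i j) ^ 2)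

/-- Entrywise application of `σ` to a matrix. -/
def entrywise (σ : ℝ → ℝ) {m n : ℕ} (M : Matrix (Fin m) (Fin n) ℝ) :
    Matrix (Fin m) (Fin n) ℝ :=
  Matrix.of fun i j => σ (M i j)

/-- `E_σ(r)`. -/
def Esig (σ : ℝ → ℝ) {din dout n : ℕ} (X : Matrix (Fin din) (Fin n) ℝ)
    (Y : Matrix (Fin dout) (Fin n) ℝ) (r : ℕ) : ℝ :=
  ⨅ (A : Matrix (Fin r) (Fin din) ℝ), ⨅ (B : Matrix (Fin dout) (Fin r) ℝ),
    frobNorm (Y - B * entrywise σ (A * X))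

/-- `E_id(r)`. -/
def Eid {din dout n : ℕ} (X : Matrix (Fin din) (Fin n) ℝ)
    (Y : Matrix (Fin dout) (Fin n) ℝ) (r : ℕ) : ℝ :=
  ⨅ (A : Matrix (Fin r) (Fin din) ℝ), ⨅ (B : Matrix (Fin dout) (Fin r) ℝ),
    frobNorm (Y - B * A * X)

/-- The (unsorted) singular values of `M`: square roots of eigenvalues of `Mᴴ * M`. -/
def svAux {m n : ℕ} (M : Matrix (Fin m) (Fin n) ℝ) : Fin n → ℝ :=
  fun i => Real.sqrt ((by simpa using Matrix.isHermitian_conjTranspose_mul_self M : (Matrix.transpose M * M).IsHermitian).eigenvalues i)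

/-- Singular values of `M` sorted in non-increasing order (0-indexed). -/
def sv {m n : ℕ} (M : Matrix (Fin m) (Fin n) ℝ) : Fin n → ℝ :=
  fun i => svAux M (Tuple.sort (fun j => -(svAux M j)) i)

/-- `k`-th largest singular value (1-indexed, `0` for `k > n`). -/
def sVal {m n : ℕ} (M : Matrix (Fin m) (Fin n) ℝ) (k : ℕ) : ℝ :=
  if h : k - 1 < n then sv M ⟨k - 1, h⟩ else 0

/-- `s_{>k}(M) = √(∑_{j>k} s_j(M)²)` (with `j` 1-indexed). -/
def sGt {m n : ℕ} (M : Matrix (Fin m) (Fin n) ℝ) (k : ℕ) : ℝ :=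
  Real.sqrt (∑ j : Fin n, if k ≤ (j : ℕ) then (sv M j) ^ 2 else 0)

/-- Spectral (ℓ²-operator) norm of a real matrix. -/
def specNorm {m n : ℕ} (M : Matrix (Fin m) (Fin n) ℝ) : ℝ :=
  ‖LinearMap.toContinuousLinearMap (Matrix.toEuclideanLin M)‖

/-- Effective rank `r_α(M)`: the least `k` with `∑_{i≤k} s_i² ≥ α ∑_i s_i²`. -/
def effRank {m n : ℕ} (M : Matrix (Fin m) (Fin n) ℝ) (α : ℝ) : ℕ :=
  sInf {k : ℕ |
    α * ∑ i : Fin n, (sv M i) ^ 2 ≤ ∑ i : Fin n, if (i : ℕ) < k then (sv M i) ^ 2 else 0}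

/-- Row space of `X` inside `Fin n → ℝ`. -/
def rowSpace {d n : ℕ} (X : Matrix (Fin d) (Fin n) ℝ) : Submodule ℝ (Fin n → ℝ) :=
  Submodule.span ℝ (Set.range X)

/-- Row space of `X` as a submodule of Euclidean space. -/
def rowSpaceE {d n : ℕ} (X : Matrix (Fin d) (Fin n) ℝ) :
    Submodule ℝ (EuclideanSpace ℝ (Fin n)) :=
  Submodule.span ℝ (Set.range fun i => (WithLp.equiv 2 (Fin n → ℝ)).symm (X i))

/-- Row-wise orthogonal projection of the rows of `Y` onto the subspace `S`. -/
def projRows {dout n : ℕ} (S : Submodule ℝ (EuclideanSpace ℝ (Fin n)))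
    (Y : Matrix (Fin dout) (Fin n) ℝ) : Matrix (Fin dout) (Fin n) ℝ :=
  Matrix.of fun i => WithLp.equiv 2 (Fin n → ℝ)
    ((S.orthogonalProjectionOnto ((WithLp.equiv 2 (Fin n → ℝ)).symm (Y i)) :
      EuclideanSpace ℝ (Fin n)))

/-- Row-wise orthogonal projection onto the orthogonal complement of `span{v}`. -/
def projVperp {dout n : ℕ} (v : Fin n → ℝ) (Y : Matrix (Fin dout) (Fin n) ℝ) :
    Matrix (Fin dout) (Fin n) ℝ :=
  projRows (Submodule.span ℝ {(WithLp.equiv 2 (Fin n → ℝ)).symm v})ᗮ Y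

open Filter Topology

private lemma sigma_diff_nhds {σ : ℝ → ℝ} (hσdiff2 : DifferentiableAt ℝ (deriv σ) 0)
    (hσ' : deriv σ 0 ≠ 0) : ∀ᶠ x in 𝓝 (0:ℝ), DifferentiableAt ℝ σ x := by
  filter_upwards [hσdiff2.continuousAt.eventually_ne hσ'] with x hx
  by_contra hd
  exact hx (deriv_zero_of_not_differentiableAt hd)

private lemma key_lim {σ : ℝ → ℝ} (hσ0 : σ 0 = 0) (hσdiff : DifferentiableAt ℝ σ 0)
    (hσdiff2 : DifferentiableAt ℝ (deriv σ) 0) (hσ' : deriv σ 0 ≠ 0) :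
    Tendsto (fun t : ℝ => (σ t - deriv σ 0 * t) / t ^ 2) (𝓝[≠] (0:ℝ))
      (𝓝 (deriv (deriv σ) 0 / 2)) := by
  set c := deriv σ 0 with hc
  have hev : ∀ᶠ x in 𝓝 (0:ℝ), DifferentiableAt ℝ σ x := sigma_diff_nhds hσdiff2 hσ'
  have hev' : ∀ᶠ x in 𝓝[≠] (0:ℝ), DifferentiableAt ℝ σ x :=
    eventually_nhdsWithin_of_eventually_nhds hev
  apply deriv.lhopital_zero_nhdsNE (f := fun t => σ t - c * t) (g := fun t => t ^ 2)
  · filter_upwards [hev'] with x hx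
    exact hx.sub ((differentiable_id.const_mul c).differentiableAt)
  · filter_upwards [self_mem_nhdsWithin] with x hx
    have : deriv (fun t : ℝ => t ^ 2) x = 2 * x := by
      simp [deriv_pow]
    rw [this]
    exact mul_ne_zero two_ne_zero hx
  · have : Tendsto (fun t => σ t - c * t) (𝓝 (0:ℝ)) (𝓝 (σ 0 - c * 0)) :=
      (hσdiff.continuousAt.sub ((continuous_const.mul continuous_id).continuousAt)).tendsto
    rw [hσ0] at this
    simpa using this.mono_left nhdsWithin_le_nhds
  · have : Tendsto (fun t : ℝ => t ^ 2) (𝓝 (0:ℝ)) (𝓝 ((0:ℝ) ^ 2)) :=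
      (continuous_pow 2).tendsto 0
    simpa using this.mono_left nhdsWithin_le_nhds
  · have hslope : Tendsto (slope (deriv σ) 0) (𝓝[≠] (0:ℝ)) (𝓝 (deriv (deriv σ) 0)) :=
      hasDerivAt_iff_tendsto_slope.mp hσdiff2.hasDerivAt
    have h2 := hslope.div_const 2
    apply h2.congr'
    filter_upwards [hev', self_mem_nhdsWithin] with x hx hx0
    have hxne : (x:ℝ) ≠ 0 := hx0
    have hdf : deriv (fun t => σ t - c * t) x = deriv σ x - c := by
      have h1 : HasDerivAt (fun t => σ t - c * t) (deriv σ x - c * 1) x :=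
        hx.hasDerivAt.sub ((hasDerivAt_id x).const_mul c)
      simpa using h1.deriv
    have hdg : deriv (fun t : ℝ => t ^ 2) x = 2 * x := by simp [deriv_pow]
    rw [hdf, hdg, slope_def_field, sub_zero, div_div, mul_comm x 2, ← hc]

private lemma coord_lim {σ : ℝ → ℝ} (hσ0 : σ 0 = 0) (hσdiff : DifferentiableAt ℝ σ 0)
    (hσdiff2 : DifferentiableAt ℝ (deriv σ) 0) (hσ' : deriv σ 0 ≠ 0) (a : ℝ) :
    Tendsto (fun t : ℝ => (σ (t * a) - deriv σ 0 * (t * a)) / t ^ 2) (𝓝[≠] (0:ℝ))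
      (𝓝 (deriv (deriv σ) 0 / 2 * a ^ 2)) := by
  rcases eq_or_ne a 0 with rfl | ha
  · simpa [hσ0] using tendsto_const_nhds (α := ℝ) (f := 𝓝[≠] (0:ℝ)) (a := (0:ℝ))
  · have h1 : Tendsto (fun t : ℝ => t * a) (𝓝[≠] (0:ℝ)) (𝓝[≠] (0:ℝ)) := by
      apply tendsto_nhdsWithin_of_tendsto_nhds_of_eventually_within
      · have h0 : Continuous (fun t : ℝ => t * a) := continuous_id.mul continuous_const
        have := h0.tendsto (0:ℝ)
        simpa using this.mono_left nhdsWithin_le_nhds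
      · filter_upwards [self_mem_nhdsWithin] with t ht
        exact mul_ne_zero ht ha
    have h2 := ((key_lim hσ0 hσdiff hσdiff2 hσ').comp h1).mul_const (a ^ 2)
    apply h2.congr'
    filter_upwards [self_mem_nhdsWithin] with t ht
    have ht' : (t:ℝ) ≠ 0 := ht
    show (σ (t * a) - deriv σ 0 * (t * a)) / (t * a) ^ 2 * a ^ 2
        = (σ (t * a) - deriv σ 0 * (t * a)) / t ^ 2
    field_simp

private lemma annih {n : ℕ} (V : Submodule ℝ (Fin n → ℝ))
    (hprod : ∀ v ∈ V, ∀ w ∈ V, (fun j => v j * w j) ∈ V)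
    (hsep : ∀ j k : Fin n, j ≠ k → ∃ v ∈ V, v j ≠ v k)
    (hnzero : ∀ j : Fin n, ∃ v ∈ V, v j ≠ 0) :
    ∀ (m : ℕ) (z : Fin n → ℝ), (Finset.univ.filter fun j => z j ≠ 0).card ≤ m →
      (∀ v ∈ V, ∑ j, v j * z j = 0) → z = 0 := by
  intro m
  induction m with
  | zero =>
    intro z hcard hz
    funext j
    simp only [Pi.zero_apply]
    by_contra hj
    have hmem : j ∈ Finset.univ.filter fun j => z j ≠ 0 := by simp [hj]
    have := Finset.card_pos.mpr ⟨j, hmem⟩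
    omega
  | succ m ih =>
    intro z hcard hz
    by_cases h0 : z = 0
    · exact h0
    exfalso
    obtain ⟨j, hj⟩ : ∃ j, z j ≠ 0 := by
      by_contra h; push_neg at h; exact h0 (funext h)
    by_cases hone : ∀ k, z k ≠ 0 → k = j
    · obtain ⟨v, hv, hvj⟩ := hnzero j
      have hsum := hz v hv
      rw [Finset.sum_eq_single j] at hsum
      · exact hvj (by
          have := mul_eq_zero.mp hsum
          tauto)
      · intro k _ hk
        have : z k = 0 := by
          by_contra hzk
          exact hk (hone k hzk)
        simp [this]
      · simp
    · push_neg at hone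
      obtain ⟨k, hk, hkj⟩ := hone
      obtain ⟨v, hv, hvjk⟩ := hsep j k (Ne.symm hkj)
      set z' : Fin n → ℝ := fun l => z l * (v l - v j) with hz'def
      have hPz' : ∀ w ∈ V, ∑ l, w l * z' l = 0 := by
        intro w hw
        have h1 := hz _ (hprod v hv w hw)
        have h2 := hz w hw
        have : ∑ l, w l * z' l = (∑ l, v l * w l * z l) - v j * ∑ l, w l * z l := by
          rw [Finset.mul_sum, ← Finset.sum_sub_distrib]
          exact Finset.sum_congr rfl fun l _ => by simp [hz'def]; ring
        rw [this, h1, h2]; ring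
      have hcard' : (Finset.univ.filter fun l => z' l ≠ 0).card ≤ m := by
        have hsub : (Finset.univ.filter fun l => z' l ≠ 0)
            ⊆ (Finset.univ.filter fun l => z l ≠ 0).erase j := by
          intro l hl
          simp only [Finset.mem_filter, Finset.mem_univ, true_and, Finset.mem_erase] at hl ⊢
          refine ⟨?_, fun h => hl (by simp [hz'def, h])⟩
          rintro rfl
          exact hl (by simp [hz'def])
        have h3 := Finset.card_le_card hsub
        have h4 := Finset.card_erase_le (a := j) (s := Finset.univ.filter fun l => z l ≠ 0)
        have hjmem : j ∈ Finset.univ.filter fun l => z l ≠ 0 := by simp [hj]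
        have h5 := Finset.card_erase_of_mem hjmem
        omega
      have hz0 := ih z' hcard' hPz'
      have : z' k ≠ 0 := mul_ne_zero hk (sub_ne_zero.mpr (Ne.symm hvjk))
      exact this (by rw [hz0]; rfl)

/-- Proposition 2: if `X` has no two identical columns, no zero
columns, `rank X < n`, and `σ` is twice differentiable at `0` with `σ(0) = 0`,
`σ'(0) ≠ 0`, `σ''(0) ≠ 0`, then there is `u` such that `σ(uᵀX)` is a nonzero vector
lying outside the row space of `X`. -/
theorem stmt1 {din n : ℕ} (X : Matrix (Fin din) (Fin n) ℝ)
    (hcols : ∀ j k : Fin n, j ≠ k → (fun i => X i j) ≠ (fun i => X i k))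
    (hnz : ∀ j : Fin n, (fun i => X i j) ≠ 0)
    (hrank : X.rank < n)
    (σ : ℝ → ℝ) (hσ0 : σ 0 = 0)
    (hσdiff : DifferentiableAt ℝ σ 0) (hσdiff2 : DifferentiableAt ℝ (deriv σ) 0)
    (hσ' : deriv σ 0 ≠ 0) (hσ'' : deriv (deriv σ) 0 ≠ 0) :
    ∃ u : Fin din → ℝ,
      (fun j => σ (Matrix.vecMul u X j)) ≠ 0 ∧
      (fun j => σ (Matrix.vecMul u X j)) ∉ rowSpace X := by
  classical
  by_contra hcon
  push_neg at hcon
  set V : Submodule ℝ (Fin n → ℝ) := rowSpace X with hVdef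
  have hvecEq : ∀ u : Fin din → ℝ, Matrix.vecMul u X = ∑ i, u i • X i := by
    intro u; funext j
    simp [Matrix.vecMul, dotProduct, Finset.sum_apply]
  have hrowmem : ∀ i, X i ∈ V := fun i => Submodule.subset_span ⟨i, rfl⟩
  have hrow : ∀ u : Fin din → ℝ, Matrix.vecMul u X ∈ V := by
    intro u; rw [hvecEq]
    exact Submodule.sum_mem _ fun i _ => Submodule.smul_mem _ _ (hrowmem i)
  have hmemf : ∀ u : Fin din → ℝ, (fun j => σ (Matrix.vecMul u X j)) ∈ V := by
    intro u
    rcases eq_or_ne (fun j => σ (Matrix.vecMul u X j)) 0 with h0 | h0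
    · rw [h0]; exact V.zero_mem
    · exact hcon u h0
  have hVclosed : IsClosed (V : Set (Fin n → ℝ)) := Submodule.closed_of_finiteDimensional V
  have hsq : ∀ u : Fin din → ℝ, (fun j => (Matrix.vecMul u X j) ^ 2) ∈ V := by
    intro u
    set a : Fin n → ℝ := Matrix.vecMul u X with hadef
    have hg : Filter.Tendsto
        (fun t : ℝ => fun j =>
          (2 / deriv (deriv σ) 0) * ((σ (t * a j) - deriv σ 0 * (t * a j)) / t ^ 2))
        (𝓝[≠] (0:ℝ)) (𝓝 (fun j => a j ^ 2)) := by
      rw [tendsto_pi_nhds]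
      intro j
      have h1 := (coord_lim hσ0 hσdiff hσdiff2 hσ' (a j)).const_mul (2 / deriv (deriv σ) 0)
      have h2 : (2 / deriv (deriv σ) 0) * (deriv (deriv σ) 0 / 2 * a j ^ 2) = a j ^ 2 := by
        field_simp
      rwa [h2] at h1
    refine hVclosed.mem_of_tendsto hg ?_
    filter_upwards [self_mem_nhdsWithin] with t ht
    have heq : (fun j => (2 / deriv (deriv σ) 0) * ((σ (t * a j) - deriv σ 0 * (t * a j)) / t ^ 2))
        = ((2 / deriv (deriv σ) 0) * (t ^ 2)⁻¹) •
          ((fun j => σ (Matrix.vecMul (t • u) X j)) - (deriv σ 0 * t) • a) := by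
      funext j
      have hvm : Matrix.vecMul (t • u) X j = t * a j := by
        rw [Matrix.smul_vecMul]; simp [hadef]
      simp only [Pi.smul_apply, Pi.sub_apply, smul_eq_mul, hvm]
      ring
    rw [heq]
    exact V.smul_mem _ (V.sub_mem (hmemf (t • u)) (V.smul_mem _ (hrow u)))
  have hprod : ∀ v ∈ V, ∀ w ∈ V, (fun j => v j * w j) ∈ V := by
    intro v hv w hw
    rw [hVdef, rowSpace] at hv hw
    replace hv := (Submodule.mem_span_range_iff_exists_fun ℝ).mp hv
    replace hw := (Submodule.mem_span_range_iff_exists_fun ℝ).mp hw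
    obtain ⟨p, hp⟩ := hv
    obtain ⟨q, hq⟩ := hw
    have hv' : v = Matrix.vecMul p X := by rw [hvecEq, hp]
    have hw' : w = Matrix.vecMul q X := by rw [hvecEq, hq]
    have heq : (fun j => v j * w j) = (2⁻¹ : ℝ) •
        ((fun j => (Matrix.vecMul (p + q) X j) ^ 2)
          - (fun j => (Matrix.vecMul p X j) ^ 2) - (fun j => (Matrix.vecMul q X j) ^ 2)) := by
      funext j
      simp only [Pi.smul_apply, Pi.sub_apply, smul_eq_mul, Matrix.add_vecMul, Pi.add_apply,
        hv', hw']
      ring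
    rw [heq]
    exact V.smul_mem _ (V.sub_mem (V.sub_mem (hsq (p + q)) (hsq p)) (hsq q))
  have hkerpos : 0 < Module.finrank ℝ (LinearMap.ker (Matrix.mulVecLin X)) := by
    have h1 := LinearMap.finrank_range_add_finrank_ker (Matrix.mulVecLin X)
    have h2 : Module.finrank ℝ (Fin n → ℝ) = n := by
      simp [Module.finrank_fintype_fun_eq_card]
    have h3 : Module.finrank ℝ (LinearMap.range (Matrix.mulVecLin X)) = X.rank := rfl
    omega
  obtain ⟨z0, hz0⟩ := Module.finrank_pos_iff_exists_ne_zero.mp hkerpos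
  set z : Fin n → ℝ := (z0 : Fin n → ℝ) with hzdef
  have hzne : z ≠ 0 := fun h => hz0 (Subtype.ext h)
  have hzker : Matrix.mulVec X z = 0 := by
    have h := z0.2
    rw [LinearMap.mem_ker, Matrix.mulVecLin_apply] at h
    exact h
  have hXz : ∀ i, ∑ j, X i j * z j = 0 := by
    intro i
    have := congrFun hzker i
    simpa [Matrix.mulVec, dotProduct] using this
  have hPz : ∀ v ∈ V, ∑ j, v j * z j = 0 := by
    intro v hv
    rw [hVdef, rowSpace] at hv
    replace hv := (Submodule.mem_span_range_iff_exists_fun ℝ).mp hv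
    obtain ⟨c, hcrep⟩ := hv
    rw [← hcrep]
    simp only [Finset.sum_apply, Pi.smul_apply, smul_eq_mul]
    calc ∑ j, (∑ i, c i * X i j) * z j = ∑ j, ∑ i, c i * (X i j * z j) :=
          Finset.sum_congr rfl fun j _ => by
            rw [Finset.sum_mul]; exact Finset.sum_congr rfl fun i _ => by ring
      _ = ∑ i, ∑ j, c i * (X i j * z j) := Finset.sum_comm
      _ = ∑ i, c i * ∑ j, X i j * z j :=
          Finset.sum_congr rfl fun i _ => (Finset.mul_sum _ _ _).symm
      _ = 0 := by simp [hXz]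
  have hsep : ∀ j k : Fin n, j ≠ k → ∃ v ∈ V, v j ≠ v k := by
    intro j k hjk
    obtain ⟨i, hi⟩ := Function.ne_iff.mp (hcols j k hjk)
    exact ⟨X i, hrowmem i, hi⟩
  have hnzero : ∀ j : Fin n, ∃ v ∈ V, v j ≠ 0 := by
    intro j
    obtain ⟨i, hi⟩ := Function.ne_iff.mp (hnz j)
    exact ⟨X i, hrowmem i, by simpa using hi⟩
  exact hzne
    (annih V hprod hsep hnzero (Finset.univ.filter fun j => z j ≠ 0).card z le_rfl hPz)


end

end CoLA
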